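/- Let (G, *, ≤) be a totally ordered commutative semigroup, i.e., a commutative semigroup G equipped with a linear order ≤ such that for all α, β, γ, δ ∈ G, α ≤ β and γ ≤ δ imply α * γ ≤ β * δ. Let n ≥ 1 and let a_1 ≤ a_2 ≤ ⋯ ≤ a_{2n} be elements of G, and let N ∈ G. Suppose there is a perfect matching of the index set {1, 2, …, 2n}, i.e., indices i_1, j_1, i_2, j_2, …, i_n, j_n with {i_1, j_1, i_2, j_2, …, i_n, j_n} = {1, 2, …, 2n}, such that a_{i_k} * a_{j_k} > N for every k = 1, …, n. Then a_k * a_{2n+1−k} > N for every k = 1, …, n. -/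

import Mathlib

/-- **Lower Bounding** in a totally ordered commutative semigroup:
a commutative semigroup `G` with a linear order such that
`α ≤ β → γ ≤ δ → α * γ ≤ β * δ`.  Indices `0, …, 2n-1` (0-based) play the
role of `1, …, 2n`; the perfect matching is a bijection
`Fin n ⊕ Fin n ≃ Fin (2n)` given by `k ↦ i k` and `k ↦ j k`, and the
conclusion pairs `a_k` with `a_{2n-1-k} = a (Fin.rev k)` for `k < n`. -/
theorem lower_bounding_semigroup {G : Type*} [CommSemigroup G] [LinearOrder G]
    (hcompat : ∀ α β γ δ : G, α ≤ β → γ ≤ δ → α * γ ≤ β * δ)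
    (n : ℕ) (hn : 1 ≤ n) (a : Fin (2 * n) → G) (ha : Monotone a) (N : G)
    (i j : Fin n → Fin (2 * n))
    (hmatch : Function.Bijective (Sum.elim i j : Fin n ⊕ Fin n → Fin (2 * n)))
    (hlt : ∀ k : Fin n, a (i k) * a (j k) > N) :
    ∀ k : Fin (2 * n), (k : ℕ) < n → a k * a k.rev > N := by
  intro k hk
  set e : Fin n ⊕ Fin n ≃ Fin (2 * n) := Equiv.ofBijective _ hmatch with he
  have heval : ∀ s, e s = Sum.elim i j s := fun s => rfl
  set sw : Fin n ⊕ Fin n → Fin n ⊕ Fin n := Sum.elim Sum.inr Sum.inl with hsw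
  set partner : Fin (2 * n) → Fin (2 * n) := fun x => e (sw (e.symm x)) with hpartner
  have hswsw : ∀ s, sw (sw s) = s := by rintro (s | s) <;> rfl
  have hpp : ∀ x, partner (partner x) = x := by
    intro x
    simp [hpartner, hswsw]
  have hinj : Function.Injective partner := Function.LeftInverse.injective hpp
  have hpair : ∀ x : Fin (2 * n), N < a x * a (partner x) := by
    intro x
    rcases h : e.symm x with m | m
    · have hx : x = i m := by
        conv_lhs => rw [← e.apply_symm_apply x, h]
        exact heval _
      have hp : partner x = j m := by
        rw [hpartner]; simp only [h, hsw, Sum.elim_inl]; exact heval _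
      rw [hp, hx]; exact hlt m
    · have hx : x = j m := by
        conv_lhs => rw [← e.apply_symm_apply x, h]
        exact heval _
      have hp : partner x = i m := by
        rw [hpartner]; simp only [h, hsw, Sum.elim_inr]; exact heval _
      rw [hp, hx, mul_comm]; exact hlt m
  by_contra hcon
  push_neg at hcon
  have hbig : ∀ x : Fin (2 * n), x ≤ k → k.rev < partner x := by
    intro x hx
    by_contra hle
    push_neg at hle
    have h1 : a x ≤ a k := ha hx
    have h2 : a (partner x) ≤ a k.rev := ha hle
    exact absurd (lt_of_lt_of_le (hpair x) (hcompat _ _ _ _ h1 h2)) (not_lt.mpr hcon)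
  have hcard : (Finset.Iic k).card ≤ (Finset.Ioi k.rev).card := by
    apply Finset.card_le_card_of_injOn partner
    · intro x hx
      rw [Finset.mem_coe] at hx; rw [Finset.mem_coe, Finset.mem_Ioi]
      exact hbig x (Finset.mem_Iic.mp hx)
    · exact hinj.injOn
  rw [Fin.card_Iic, Fin.card_Ioi, Fin.val_rev] at hcard
  omega
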